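/- Let V be a finite-dimensional Hilbert space and G ≤ Aut(V) a finite group of linear isometries. Let v, w ∈ V be such that g ↦ ‖v − gw‖ is injective on G and |Gv| = |Gw| = |G|. Define β : Gv → Gw by β(x) = argmin_{y ∈ Gw} ‖x − y‖. Then β is a well-defined G-equivariant bijection, and moreover β∘σ = σ∘β for every permutation σ of Gv ∪ Gw that extends to a linear isometry of V and maps Gv to Gv and Gw to Gw. -/

import Mathlib

/-- Orbit pairing lemma: if `g ↦ ‖v - g w‖` is injective on `G` and both orbits have
`|G|` elements, then the nearest-point map `β : Gv → Gw` is a well-defined (unique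
argmin) `G`-equivariant bijection, and `β ∘ σ = σ ∘ β` for every permutation `σ` of
`Gv ∪ Gw` extending to a linear isometry and preserving each orbit. -/
theorem stmt_12 (𝕜 : Type*) [RCLike 𝕜] (V : Type*) [NormedAddCommGroup V]
    [InnerProductSpace 𝕜 V] [FiniteDimensional 𝕜 V]
    (G : Subgroup (V ≃ₗᵢ[𝕜] V)) [Finite G] (v w : V)
    (Sv Sw : Set V)
    (hSv : Sv = Set.range fun g : G => (g : V ≃ₗᵢ[𝕜] V) v)
    (hSw : Sw = Set.range fun g : G => (g : V ≃ₗᵢ[𝕜] V) w)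
    (hinj : Function.Injective fun g : G => ‖v - (g : V ≃ₗᵢ[𝕜] V) w‖)
    (hcv : Sv.ncard = Nat.card G) (hcw : Sw.ncard = Nat.card G)
    (β : Sv → Sw)
    (hβ : ∀ x : Sv, ∀ y : Sw, ‖(x : V) - (β x : V)‖ ≤ ‖(x : V) - (y : V)‖) :
    -- the argmin is unique, so `β` is well defined
    (∀ x : Sv, ∀ y : Sw, (∀ y' : Sw, ‖(x : V) - (y : V)‖ ≤ ‖(x : V) - (y' : V)‖)
        → y = β x) ∧
    -- `β` is a bijection
    Function.Bijective β ∧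
    -- `β` is `G`-equivariant
    (∀ (g : G) (x x' : Sv), (x' : V) = (g : V ≃ₗᵢ[𝕜] V) (x : V) →
      (β x' : V) = (g : V ≃ₗᵢ[𝕜] V) (β x : V)) ∧
    -- `β` commutes with every symmetry of `Gv ∪ Gw`
    (∀ σ : Equiv.Perm (Sv ∪ Sw : Set V),
      (∃ M : V ≃ₗᵢ[𝕜] V, ∀ x : (Sv ∪ Sw : Set V), (σ x : V) = M x) →
      (∀ x : (Sv ∪ Sw : Set V), ((x : V) ∈ Sv → (σ x : V) ∈ Sv) ∧
        ((x : V) ∈ Sw → (σ x : V) ∈ Sw)) →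
      ∀ (x : Sv) (h1 : (x : V) ∈ Sv ∪ Sw) (h2 : ((β x : V)) ∈ Sv ∪ Sw)
        (hσx : (σ ⟨(x : V), h1⟩ : V) ∈ Sv),
        (σ ⟨(β x : V), h2⟩ : V) = (β ⟨(σ ⟨(x : V), h1⟩ : V), hσx⟩ : V)) := by
  -- basic isometry fact
  have hiso : ∀ (e : V ≃ₗᵢ[𝕜] V) (a b : V), ‖e a - e b‖ = ‖a - b‖ := by
    intro e a b; rw [← map_sub]; exact e.norm_map _
  -- key distance-injectivity from any point of the orbit of v
  have hdist : ∀ (a b b' : G),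
      ‖(a : V ≃ₗᵢ[𝕜] V) v - (b : V ≃ₗᵢ[𝕜] V) w‖
        = ‖(a : V ≃ₗᵢ[𝕜] V) v - (b' : V ≃ₗᵢ[𝕜] V) w‖ → b = b' := by
    intro a b b' h
    have e1 : ∀ c : G, ‖(a : V ≃ₗᵢ[𝕜] V) v - (c : V ≃ₗᵢ[𝕜] V) w‖
        = ‖v - ((a⁻¹ * c : G) : V ≃ₗᵢ[𝕜] V) w‖ := by
      intro c
      have := hiso ((a⁻¹ : G) : V ≃ₗᵢ[𝕜] V) ((a : V ≃ₗᵢ[𝕜] V) v) ((c : V ≃ₗᵢ[𝕜] V) w)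
      rw [← this]
      simp
    rw [e1 b, e1 b'] at h
    exact mul_left_cancel (hinj h)
  -- freeness of the action on the orbit of w
  have hfw : Function.Injective fun g : G => (g : V ≃ₗᵢ[𝕜] V) w := by
    set f : G → V := fun g => (g : V ≃ₗᵢ[𝕜] V) w with hf
    have hfin : (Set.range f).Finite := Set.finite_range f
    have : Finite ↥(Set.range f) := hfin.to_subtype
    have hcard : Nat.card G = Nat.card ↥(Set.range f) := by
      rw [Nat.card_coe_set_eq, ← hSw, hcw]
    have hbij : Function.Bijective (Set.rangeFactorization f) :=
      (Nat.bijective_iff_surjective_and_card _).mpr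
        ⟨Set.rangeFactorization_surjective, hcard⟩
    intro a b hab
    exact hbij.1 (Subtype.ext hab)
  -- uniqueness of the argmin
  have huniq : ∀ x : Sv, ∀ y : Sw,
      (∀ y' : Sw, ‖(x : V) - (y : V)‖ ≤ ‖(x : V) - (y' : V)‖) → y = β x := by
    intro x y hy
    have heq : ‖(x : V) - (y : V)‖ = ‖(x : V) - (β x : V)‖ :=
      le_antisymm (hy (β x)) (hβ x y)
    have hx2 : (x : V) ∈ Set.range (fun g : G => (g : V ≃ₗᵢ[𝕜] V) v) := by
      rw [← hSv]; exact x.2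
    have hy2 : (y : V) ∈ Set.range (fun g : G => (g : V ≃ₗᵢ[𝕜] V) w) := by
      rw [← hSw]; exact y.2
    have hb2 : (β x : V) ∈ Set.range (fun g : G => (g : V ≃ₗᵢ[𝕜] V) w) := by
      rw [← hSw]; exact (β x).2
    obtain ⟨a, ha⟩ := hx2
    obtain ⟨b, hb⟩ := hy2
    obtain ⟨b', hb'⟩ := hb2
    apply Subtype.ext
    rw [← hb, ← hb']
    have : b = b' := by
      apply hdist a
      simp only at ha hb hb'
      rw [ha, hb, hb']
      exact heq
    rw [this]
  -- equivariance
  have hequiv : ∀ (g : G) (x x' : Sv), (x' : V) = (g : V ≃ₗᵢ[𝕜] V) (x : V) →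
      (β x' : V) = (g : V ≃ₗᵢ[𝕜] V) (β x : V) := by
    intro g x x' hx'
    have hb2 : (β x : V) ∈ Set.range (fun g : G => (g : V ≃ₗᵢ[𝕜] V) w) := by
      rw [← hSw]; exact (β x).2
    obtain ⟨b, hb⟩ := hb2
    simp only at hb
    have hmem : (g : V ≃ₗᵢ[𝕜] V) (β x : V) ∈ Sw := by
      have h0 : ((g * b : G) : V ≃ₗᵢ[𝕜] V) w = (g : V ≃ₗᵢ[𝕜] V) (β x : V) := by
        simp [← hb]
      rw [← h0, hSw]
      exact ⟨g * b, rfl⟩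
    have := huniq x' ⟨_, hmem⟩ ?_
    · exact (congrArg Subtype.val this).symm
    · intro y'
      have hy2 : (y' : V) ∈ Set.range (fun g : G => (g : V ≃ₗᵢ[𝕜] V) w) := by
        rw [← hSw]; exact y'.2
      obtain ⟨b', hb'⟩ := hy2
      simp only at hb'
      have step : ‖(x' : V) - (g : V ≃ₗᵢ[𝕜] V) (β x : V)‖ = ‖(x : V) - (β x : V)‖ := by
        rw [hx', hiso]
      have step2 : ‖(x' : V) - (y' : V)‖
          = ‖(x : V) - ((g⁻¹ * b' : G) : V ≃ₗᵢ[𝕜] V) w‖ := by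
        rw [hx', ← hb']
        rw [← hiso (g : V ≃ₗᵢ[𝕜] V) (x : V) (((g⁻¹ * b' : G) : V ≃ₗᵢ[𝕜] V) w)]
        simp
      have := hβ x ⟨((g⁻¹ * b' : G) : V ≃ₗᵢ[𝕜] V) w, by rw [hSw]; exact ⟨g⁻¹ * b', rfl⟩⟩
      simp only at this
      rw [step, step2]
      exact this
  refine ⟨huniq, ?_, hequiv, ?_⟩
  · -- bijectivity
    have hvmem : v ∈ Sv := by rw [hSv]; exact ⟨1, by simp⟩
    have hinjβ : Function.Injective β := by
      intro x x' h
      have hx2 : (x : V) ∈ Set.range (fun g : G => (g : V ≃ₗᵢ[𝕜] V) v) := by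
        rw [← hSv]; exact x.2
      have hx'2 : (x' : V) ∈ Set.range (fun g : G => (g : V ≃ₗᵢ[𝕜] V) v) := by
        rw [← hSv]; exact x'.2
      obtain ⟨a, ha⟩ := hx2
      obtain ⟨a', ha'⟩ := hx'2
      simp only at ha ha'
      have e1 := hequiv a ⟨v, hvmem⟩ x ha.symm
      have e2 := hequiv a' ⟨v, hvmem⟩ x' ha'.symm
      have hb2 : ((β ⟨v, hvmem⟩ : Sw) : V) ∈ Set.range (fun g : G => (g : V ≃ₗᵢ[𝕜] V) w) := by
        rw [← hSw]; exact (β ⟨v, hvmem⟩).2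
      obtain ⟨b, hb⟩ := hb2
      simp only at hb
      have : (a * b : G) = (a' * b : G) := by
        apply hfw
        rw [h] at e1
        show (((a * b : G) : V ≃ₗᵢ[𝕜] V)) w = (((a' * b : G) : V ≃ₗᵢ[𝕜] V)) w
        have c1 : (((a * b : G) : V ≃ₗᵢ[𝕜] V)) w = (a : V ≃ₗᵢ[𝕜] V) ((b : V ≃ₗᵢ[𝕜] V) w) := by
          simp
        have c2 : (((a' * b : G) : V ≃ₗᵢ[𝕜] V)) w = (a' : V ≃ₗᵢ[𝕜] V) ((b : V ≃ₗᵢ[𝕜] V) w) := by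
          simp
        rw [c1, c2, hb, ← e1, ← e2]
      have haa : a = a' := mul_right_cancel this
      apply Subtype.ext
      rw [← ha, ← ha', haa]
    have hfinv : Sv.Finite := by rw [hSv]; exact Set.finite_range _
    have hfinw : Sw.Finite := by rw [hSw]; exact Set.finite_range _
    have : Finite ↥Sv := hfinv.to_subtype
    have : Finite ↥Sw := hfinw.to_subtype
    refine (Nat.bijective_iff_injective_and_card _).mpr ⟨hinjβ, ?_⟩
    rw [Nat.card_coe_set_eq, Nat.card_coe_set_eq, hcv, hcw]
  · -- commutation with symmetries
    intro σ ⟨M, hM⟩ hpres x h1 h2 hσx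
    have hfinw : Sw.Finite := by rw [hSw]; exact Set.finite_range _
    have : Finite ↥Sw := hfinw.to_subtype
    -- σ restricted to Sw is surjective onto Sw
    have hτ : ∀ y : Sw, ∃ y₀ : Sw, (σ ⟨(y₀ : V), Or.inr y₀.2⟩ : V) = (y : V) := by
      have hτinj : Function.Injective (fun y : Sw =>
          (⟨(σ ⟨(y : V), Or.inr y.2⟩ : V),
            (hpres ⟨(y : V), Or.inr y.2⟩).2 y.2⟩ : Sw)) := by
        intro y y' h
        simp only [Subtype.mk.injEq] at h
        have h2 := σ.injective (Subtype.ext h)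
        replace h2 := congrArg Subtype.val h2
        exact Subtype.ext h2
      have hτsurj := Finite.surjective_of_injective hτinj
      intro y
      obtain ⟨y₀, hy₀⟩ := hτsurj y
      exact ⟨y₀, congrArg Subtype.val hy₀⟩
    have hmem : (σ ⟨(β x : V), h2⟩ : V) ∈ Sw :=
      (hpres ⟨(β x : V), h2⟩).2 (β x).2
    have key := huniq ⟨(σ ⟨(x : V), h1⟩ : V), hσx⟩ ⟨_, hmem⟩ ?_
    · exact congrArg Subtype.val key
    · intro y'
      obtain ⟨y₀, hy₀⟩ := hτ y'
      have eM1 : (σ ⟨(x : V), h1⟩ : V) = M (x : V) := hM _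
      have eM2 : (σ ⟨(β x : V), h2⟩ : V) = M (β x : V) := hM _
      have eM3 : (σ ⟨(y₀ : V), Or.inr y₀.2⟩ : V) = M (y₀ : V) := hM _
      show ‖(σ ⟨(x : V), h1⟩ : V) - (σ ⟨(β x : V), h2⟩ : V)‖
          ≤ ‖(σ ⟨(x : V), h1⟩ : V) - (y' : V)‖
      rw [eM1, eM2, ← hy₀, eM3, hiso, hiso]
      exact hβ x y₀
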